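/- Let a, c ∈ ℕ and b, d ∈ ℤ with ad = bc. Then the set L of values φ(an+b)/φ(cn+d), where n ranges over positive integers with n > max{-b/a, -d/c}, is finite with cardinality #L = 2^{ω(τ_c(a)·τ_a(c))}, where ω(n) is the number of distinct prime factors of n. -/

import Mathlib

open Finset


/-- Key number-theoretic injectivity: product of (p-1) over X times product of p over Y,
equality forces X = Y for finsets of primes. -/
lemma prod_pred_mul_prod_eq_aux : ∀ n : ℕ, ∀ X Y : Finset ℕ, (X ∪ Y).card = n →
    (∀ p ∈ X, p.Prime) → (∀ p ∈ Y, p.Prime) →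
    (∏ p ∈ X, (p-1)) * ∏ p ∈ Y, p = (∏ p ∈ Y, (p-1)) * ∏ p ∈ X, p → X = Y := by
  intro n
  induction n using Nat.strong_induction_on with
  | _ n ih =>
  intro X Y hn hX hY h
  rcases eq_or_ne (X ∪ Y) ∅ with he | he
  · rw [union_eq_empty] at he; rw [he.1, he.2]
  · have hne : (X ∪ Y).Nonempty := nonempty_iff_ne_empty.2 he
    set q := (X ∪ Y).max' hne with hq
    have hqmem : q ∈ X ∪ Y := max'_mem _ hne
    have hqmax : ∀ p ∈ X ∪ Y, p ≤ q := fun p hp => le_max' _ p hp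
    have hqp : q.Prime := by rcases mem_union.1 hqmem with h' | h'; exacts [hX q h', hY q h']
    -- q does not divide any (p-1)
    have hnd : ∀ (Z : Finset ℕ), (∀ p ∈ Z, p.Prime) → (∀ p ∈ Z, p ≤ q) → ¬ q ∣ ∏ p ∈ Z, (p-1) := by
      intro Z hZ hZq hdvd
      obtain ⟨p, hp, hqd⟩ := (hqp.prime.dvd_finset_prod_iff _).1 hdvd
      have h2 := (hZ p hp).two_le
      have := Nat.le_of_dvd (by omega) hqd
      have := hZq p hp
      have := hqp.two_le
      omega
    have hndp : ∀ (Z : Finset ℕ), (∀ p ∈ Z, p.Prime) → q ∉ Z → ¬ q ∣ ∏ p ∈ Z, p := by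
      intro Z hZ hqZ hdvd
      obtain ⟨p, hp, hqd⟩ := (hqp.prime.dvd_finset_prod_iff _).1 hdvd
      rw [Nat.prime_dvd_prime_iff_eq hqp (hZ p hp)] at hqd
      exact hqZ (hqd ▸ hp)
    have hiff : q ∈ X ↔ q ∈ Y := by
      constructor
      · intro hqX
        by_contra hqY
        have h1 : q ∣ (∏ p ∈ Y, (p-1)) * ∏ p ∈ X, p :=
          Dvd.dvd.mul_left (dvd_prod_of_mem _ hqX) _
        rw [← h] at h1
        rcases (Nat.Prime.dvd_mul hqp).1 h1 with h2 | h2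
        · exact hnd X hX (fun p hp => hqmax p (mem_union_left _ hp)) h2
        · exact hndp Y hY hqY h2
      · intro hqY
        by_contra hqX
        have h1 : q ∣ (∏ p ∈ X, (p-1)) * ∏ p ∈ Y, p :=
          Dvd.dvd.mul_left (dvd_prod_of_mem _ hqY) _
        rw [h] at h1
        rcases (Nat.Prime.dvd_mul hqp).1 h1 with h2 | h2
        · exact hnd Y hY (fun p hp => hqmax p (mem_union_right _ hp)) h2
        · exact hndp X hX hqX h2
    -- q in both; erase it
    have hqX : q ∈ X := by
      rcases mem_union.1 hqmem with h' | h'; exacts [h', hiff.2 h']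
    have hqY : q ∈ Y := hiff.1 hqX
    have hXe : X = insert q (X.erase q) := (insert_erase hqX).symm
    have hYe : Y = insert q (Y.erase q) := (insert_erase hqY).symm
    have hprod : ∀ (Z : Finset ℕ) (f : ℕ → ℕ), q ∈ Z → ∏ p ∈ Z, f p = f q * ∏ p ∈ Z.erase q, f p := by
      intro Z f hqZ
      rw [← prod_erase_mul _ _ hqZ, mul_comm]
    rw [hprod X _ hqX, hprod Y (fun p => p) hqY, hprod Y (fun p => p - 1) hqY,
      hprod X (fun p => p) hqX] at h
    have hq1 : 0 < q - 1 := by have := hqp.two_le; omega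
    have h' : (∏ p ∈ X.erase q, (p-1)) * ∏ p ∈ Y.erase q, p
        = (∏ p ∈ Y.erase q, (p-1)) * ∏ p ∈ X.erase q, p := by
      have := hqp.pos
      have hk : (q-1) * q * ((∏ p ∈ X.erase q, (p-1)) * ∏ p ∈ Y.erase q, p)
          = (q-1) * q * ((∏ p ∈ Y.erase q, (p-1)) * ∏ p ∈ X.erase q, p) := by ring_nf; ring_nf at h; linarith [h]
      exact Nat.eq_of_mul_eq_mul_left (by positivity) hk
    have hcard : ((X.erase q) ∪ (Y.erase q)).card < n := by
      rw [← hn]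
      have hsub : (X.erase q) ∪ (Y.erase q) ⊆ (X ∪ Y).erase q := by
        intro p hp
        rcases mem_union.1 hp with h' | h'
        · exact mem_erase.2 ⟨(mem_erase.1 h').1, mem_union_left _ (mem_erase.1 h').2⟩
        · exact mem_erase.2 ⟨(mem_erase.1 h').1, mem_union_right _ (mem_erase.1 h').2⟩
      calc ((X.erase q) ∪ (Y.erase q)).card ≤ ((X ∪ Y).erase q).card := card_le_card hsub
        _ < (X ∪ Y).card := card_erase_lt_of_mem hqmem
    have := ih _ hcard _ _ rfl (fun p hp => hX p (erase_subset _ _ hp))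
      (fun p hp => hY p (erase_subset _ _ hp)) h'
    rw [hXe, hYe, this]

lemma prod_pred_mul_prod_eq {X Y : Finset ℕ} (hX : ∀ p ∈ X, p.Prime) (hY : ∀ p ∈ Y, p.Prime)
    (h : (∏ p ∈ X, (p-1)) * ∏ p ∈ Y, p = (∏ p ∈ Y, (p-1)) * ∏ p ∈ X, p) : X = Y :=
  prod_pred_mul_prod_eq_aux _ X Y rfl hX hY h


lemma prod_factor_eq_div {X : Finset ℕ} (hX : ∀ p ∈ X, p.Prime) :
    ∏ p ∈ X, (1 - (p:ℝ)⁻¹) = ((∏ p ∈ X, (p-1) : ℕ) : ℝ) / ((∏ p ∈ X, p : ℕ) : ℝ) := by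
  push_cast
  rw [← prod_div_distrib]
  refine prod_congr rfl fun p hp => ?_
  have h2 := (hX p hp).two_le
  have hp0 : (p:ℝ) ≠ 0 := by positivity
  rw [Nat.cast_sub (by omega)]
  field_simp
  simp

lemma prod_pos_factor {X : Finset ℕ} (hX : ∀ p ∈ X, p.Prime) :
    0 < ∏ p ∈ X, (1 - (p:ℝ)⁻¹) := by
  apply prod_pos
  intro p hp
  have h2 := (hX p hp).two_le
  have : (2:ℝ) ≤ p := by exact_mod_cast h2
  have : (p:ℝ)⁻¹ ≤ 2⁻¹ := by
    apply inv_anti₀ <;> norm_num <;> linarith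
  norm_num
  linarith [this]

lemma prod_one_sub_inv_inj {X Y : Finset ℕ} (hX : ∀ p ∈ X, p.Prime) (hY : ∀ p ∈ Y, p.Prime)
    (h : ∏ p ∈ X, (1 - (p:ℝ)⁻¹) = ∏ p ∈ Y, (1 - (p:ℝ)⁻¹)) : X = Y := by
  rw [prod_factor_eq_div hX, prod_factor_eq_div hY] at h
  have hXp : (0:ℝ) < ((∏ p ∈ X, p : ℕ) : ℝ) := by
    have : 0 < ∏ p ∈ X, p := prod_pos fun p hp => (hX p hp).pos
    exact_mod_cast this
  have hYp : (0:ℝ) < ((∏ p ∈ Y, p : ℕ) : ℝ) := by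
    have : 0 < ∏ p ∈ Y, p := prod_pos fun p hp => (hY p hp).pos
    exact_mod_cast this
  rw [div_eq_div_iff (by positivity) (by positivity)] at h
  apply prod_pred_mul_prod_eq hX hY
  exact_mod_cast h


lemma totient_real (N : ℕ) : (N.totient : ℝ) = N * ∏ p ∈ N.primeFactors, (1 - (p:ℝ)⁻¹) := by
  have h := Nat.totient_eq_mul_prod_factors N
  have h2 := congrArg (fun q : ℚ => (q : ℝ)) h
  push_cast at h2
  exact_mod_cast h2

lemma totient_mul_real (m t : ℕ) (hm : m ≠ 0) (ht : t ≠ 0) :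
    ((m*t).totient : ℝ) = (t.totient : ℝ) * m *
      ∏ p ∈ m.primeFactors.filter (fun p => ¬ p ∣ t), (1 - (p:ℝ)⁻¹) := by
  have hsd : m.primeFactors \ t.primeFactors = m.primeFactors.filter (fun p => ¬ p ∣ t) := by
    ext p
    simp only [mem_sdiff, Nat.mem_primeFactors, mem_filter]
    constructor
    · rintro ⟨⟨hp, hpm, _⟩, hnot⟩
      exact ⟨⟨hp, hpm, hm⟩, fun hd => hnot ⟨hp, hd, ht⟩⟩
    · rintro ⟨⟨hp, hpm, _⟩, hnot⟩
      exact ⟨⟨hp, hpm, hm⟩, fun ⟨_, hd, _⟩ => hnot hd⟩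
  have hu : (m*t).primeFactors = t.primeFactors ∪ (m.primeFactors \ t.primeFactors) := by
    rw [Nat.primeFactors_mul hm ht, union_comm, ← union_sdiff_self_eq_union]
  rw [totient_real, totient_real t, hu, prod_union disjoint_sdiff, hsd]
  push_cast
  ring


lemma exists_residues (g : ℕ) (b₀ : ℤ) (S : Finset ℕ) :
    ∀ E : Finset ℕ, (∀ p ∈ E, p.Prime ∧ ¬ p ∣ g) →
    ∃ n₀ : ℕ, ∀ k : ℕ, ∀ p ∈ E,
      ((p:ℤ) ∣ ((g:ℤ) * ((n₀ + k * ∏ q ∈ E, q : ℕ) : ℤ) + b₀) ↔ p ∉ S) := by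
  classical
  intro E
  induction E using Finset.induction_on with
  | empty => intro _; exact ⟨0, fun k p hp => absurd hp (notMem_empty p)⟩
  | @insert q E hq IH =>
    intro hE
    obtain ⟨n₀, hn₀⟩ := IH (fun p hp => hE p (mem_insert_of_mem hp))
    have hqp : q.Prime := (hE q (mem_insert_self q E)).1
    have hqg : ¬ q ∣ g := (hE q (mem_insert_self q E)).2
    haveI : Fact q.Prime := ⟨hqp⟩
    set M : ℕ := ∏ p ∈ E, p with hM
    have hqM : ¬ q ∣ M := by
      intro hd
      obtain ⟨p, hp, hqd⟩ := (hqp.prime.dvd_finset_prod_iff _).1 hd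
      rw [Nat.prime_dvd_prime_iff_eq hqp (hE p (mem_insert_of_mem hp)).1] at hqd
      exact hq (hqd ▸ hp)
    have hu : ((g * M : ℕ) : ZMod q) ≠ 0 := by
      intro h0
      rw [ZMod.natCast_eq_zero_iff] at h0
      rcases (Nat.Prime.dvd_mul hqp).1 h0 with h | h
      exacts [hqg h, hqM h]
    set u : ZMod q := ((g * M : ℕ) : ZMod q) with hu'
    set cc : ZMod q := (((g:ℤ) * n₀ + b₀ : ℤ) : ZMod q) with hcc
    set target : ZMod q := if q ∈ S then 1 else 0 with htarget
    set k₀ : ℕ := ((target - cc) * u⁻¹).val with hk₀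
    refine ⟨n₀ + k₀ * M, fun k p hp => ?_⟩
    rw [prod_insert hq]
    rcases mem_insert.1 hp with hpq | hpE
    · -- p = q case
      rw [hpq]
      have hcast : (((g:ℤ) * ((n₀ + k₀ * M + k * (q * M) : ℕ) : ℤ) + b₀ : ℤ) : ZMod q) = target := by
        push_cast
        have hk₀' : ((k₀ : ℕ) : ZMod q) = (target - cc) * u⁻¹ := by
          rw [hk₀, ZMod.natCast_val, ZMod.cast_id]
        have hq0 : ((q : ℕ) : ZMod q) = 0 := ZMod.natCast_self q
        have : ((g:ZMod q) * ((n₀:ZMod q) + (k₀:ZMod q) * (M:ZMod q) + (k:ZMod q) * ((q:ZMod q) * (M:ZMod q))) + (b₀:ZMod q))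
            = cc + u * (k₀ : ZMod q) := by
          rw [hcc, hu']
          push_cast
          rw [hq0]
          ring
        rw [this, hk₀']
        rw [mul_comm ((target - cc)) u⁻¹, ← mul_assoc, mul_inv_cancel₀ hu]
        ring
      rw [← ZMod.intCast_zmod_eq_zero_iff_dvd, hcast, htarget]
      by_cases hqS : q ∈ S
      · simp only [hqS, if_true]
        simpa using one_ne_zero
      · simp [hqS]
    · -- p ∈ E case
      have harith : (n₀ + k₀ * M + k * (q * M) : ℕ) = n₀ + (k₀ + k * q) * M := by ring
      rw [harith]
      exact hn₀ (k₀ + k * q) p hpE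

/-- `tau n m` is the product of the prime powers `p^k` exactly dividing `m` with `p ∤ n`,
i.e. the part of `m` coprime to `n`. -/
def tau (n m : ℕ) : ℕ :=
  ∏ p ∈ m.primeFactors.filter (fun p => ¬ p ∣ n), p ^ m.factorization p


lemma primeFactors_prod_pow (s : Finset ℕ) (f : ℕ → ℕ) (h : ∀ p ∈ s, p.Prime ∧ 0 < f p) :
    (∏ p ∈ s, p ^ f p).primeFactors = s := by
  classical
  induction s using Finset.induction_on with
  | empty => simp
  | @insert q s hq IH =>
    have hqp := (h q (mem_insert_self q s)).1
    have hprodne : (∏ p ∈ s, p ^ f p) ≠ 0 :=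
      (prod_pos (fun p hp => pow_pos (h p (mem_insert_of_mem hp)).1.pos _)).ne'
    rw [prod_insert hq, Nat.primeFactors_mul (pow_ne_zero _ hqp.pos.ne') hprodne,
      IH (fun p hp => h p (mem_insert_of_mem hp)), Nat.primeFactors_pow _ (h q (mem_insert_self q s)).2.ne',
      hqp.primeFactors, insert_eq]

lemma tau_ne_zero (n m : ℕ) : tau n m ≠ 0 := by
  refine (prod_pos fun p hp => pow_pos ?_ _).ne'
  exact (Nat.prime_of_mem_primeFactors (mem_filter.1 hp).1).pos

lemma tau_primeFactors (n m : ℕ) :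
    (tau n m).primeFactors = m.primeFactors.filter (fun p => ¬ p ∣ n) := by
  apply primeFactors_prod_pow
  intro p hp
  have h1 := mem_filter.1 hp
  have hp' := Nat.prime_of_mem_primeFactors h1.1
  refine ⟨hp', hp'.factorization_pos_of_dvd ?_ ?_⟩
  · exact (Nat.mem_primeFactors.1 h1.1).2.2
  · exact (Nat.mem_primeFactors.1 h1.1).2.1

theorem card_totient_quotient (a c : ℕ) (ha : 0 < a) (hc : 0 < c) (b d : ℤ)
    (h : (a : ℤ) * d = b * c) :
    ({y : ℝ | ∃ n : ℕ, 0 < n ∧ 0 < (a : ℤ) * n + b ∧ 0 < (c : ℤ) * n + d ∧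
        y = (Nat.totient ((a : ℤ) * n + b).toNat : ℝ) /
            (Nat.totient ((c : ℤ) * n + d).toNat : ℝ)}.Finite) ∧
    ({y : ℝ | ∃ n : ℕ, 0 < n ∧ 0 < (a : ℤ) * n + b ∧ 0 < (c : ℤ) * n + d ∧
        y = (Nat.totient ((a : ℤ) * n + b).toNat : ℝ) /
            (Nat.totient ((c : ℤ) * n + d).toNat : ℝ)}.ncard
      = 2 ^ (tau c a * tau a c).primeFactors.card) := by
  classical
  set g := Nat.gcd a c with hgdef
  have hg : 0 < g := Nat.gcd_pos_of_pos_left c ha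
  set a' := a / g with ha'def
  set c' := c / g with hc'def
  have haa : g * a' = a := Nat.mul_div_cancel' (Nat.gcd_dvd_left a c)
  have hccc : g * c' = c := Nat.mul_div_cancel' (Nat.gcd_dvd_right a c)
  have hcop : Nat.Coprime a' c' := Nat.coprime_div_gcd_div_gcd hg
  have ha' : 0 < a' := by
    rcases Nat.eq_zero_or_pos a' with h0 | h0
    · rw [h0, mul_zero] at haa; omega
    · exact h0
  have hc' : 0 < c' := by
    rcases Nat.eq_zero_or_pos c' with h0 | h0
    · rw [h0, mul_zero] at hccc; omega
    · exact h0
  have haZ : (a:ℤ) = (g:ℤ) * (a':ℤ) := by exact_mod_cast congrArg (Nat.cast : ℕ → ℤ) haa.symm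
  have hcZ : (c:ℤ) = (g:ℤ) * (c':ℤ) := by exact_mod_cast congrArg (Nat.cast : ℕ → ℤ) hccc.symm
  have hgZ : (g:ℤ) ≠ 0 := by exact_mod_cast hg.ne'
  have ha'Z : (0:ℤ) < (a':ℤ) := by exact_mod_cast ha'
  have hc'Z : (0:ℤ) < (c':ℤ) := by exact_mod_cast hc'
  have hIdent : (a':ℤ) * d = b * (c':ℤ) := by
    apply mul_left_cancel₀ hgZ
    rw [haZ] at h; rw [hcZ] at h
    linarith [h]
  have hco : IsCoprime (a':ℤ) (c':ℤ) := Nat.isCoprime_iff_coprime.mpr hcop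
  have hdvd : (a':ℤ) ∣ b := hco.dvd_of_dvd_mul_right ⟨d, hIdent.symm⟩
  obtain ⟨b₀, hb₀⟩ := hdvd
  have hd : d = (c':ℤ) * b₀ := by
    apply mul_left_cancel₀ ha'Z.ne'
    rw [hIdent, hb₀]; ring
  -- key identities
  have key1 : ∀ n : ℕ, (a:ℤ)*n + b = (a':ℤ) * ((g:ℤ)*n + b₀) := by
    intro n; rw [hb₀, haZ]; ring
  have key2 : ∀ n : ℕ, (c:ℤ)*n + d = (c':ℤ) * ((g:ℤ)*n + b₀) := by
    intro n; rw [hd, hcZ]; ring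
  set T : ℕ → ℤ := fun n => (g:ℤ)*n + b₀ with hT
  set t : ℕ → ℕ := fun n => (T n).toNat with ht
  set A := a'.primeFactors.filter (fun p => ¬ p ∣ g) with hAdef
  set C := c'.primeFactors.filter (fun p => ¬ p ∣ g) with hCdef
  set Fa := a'.primeFactors.filter (fun p => p ∣ g ∧ ¬ (p:ℤ) ∣ b₀) with hFadef
  set Fc := c'.primeFactors.filter (fun p => p ∣ g ∧ ¬ (p:ℤ) ∣ b₀) with hFcdef
  set D := A ∪ C with hDdef
  set V : Finset ℕ → ℝ := fun S =>
    ((a':ℝ) * ∏ p ∈ Fa ∪ (S ∩ A), (1 - (p:ℝ)⁻¹)) /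
    ((c':ℝ) * ∏ p ∈ Fc ∪ (S ∩ C), (1 - (p:ℝ)⁻¹)) with hV
  have hdisj : Disjoint a'.primeFactors c'.primeFactors := hcop.disjoint_primeFactors
  have hDprime : ∀ p ∈ D, p.Prime ∧ ¬ p ∣ g := by
    intro p hp
    rcases mem_union.1 hp with h' | h' <;>
      exact ⟨Nat.prime_of_mem_primeFactors (mem_filter.1 h').1, (mem_filter.1 h').2⟩
  have hFaSub : ∀ S : Finset ℕ, Fa ∪ (S ∩ A) ⊆ a'.primeFactors := by
    intro S
    exact union_subset (filter_subset _ _)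
      (inter_subset_right.trans (filter_subset _ _))
  have hFcSub : ∀ S : Finset ℕ, Fc ∪ (S ∩ C) ⊆ c'.primeFactors := by
    intro S
    exact union_subset (filter_subset _ _)
      (inter_subset_right.trans (filter_subset _ _))
  have hPaPrime : ∀ p ∈ a'.primeFactors, p.Prime := fun p hp => Nat.prime_of_mem_primeFactors hp
  have hPcPrime : ∀ p ∈ c'.primeFactors, p.Prime := fun p hp => Nat.prime_of_mem_primeFactors hp
  -- the computation of the value for a given n
  have hval : ∀ n : ℕ, 0 < T n →
      ((Nat.totient ((a:ℤ)*n+b).toNat : ℝ) / (Nat.totient ((c:ℤ)*n+d).toNat : ℝ))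
        = V (D.filter fun p => ¬ (p:ℤ) ∣ T n) := by
    intro n hTn
    have htcast : ((t n : ℕ) : ℤ) = T n := Int.toNat_of_nonneg hTn.le
    have htn : 0 < t n := by
      simp only [ht]; omega
    have hconv : ∀ p : ℕ, p ∣ t n ↔ (p:ℤ) ∣ T n := by
      intro p
      rw [← htcast, Int.natCast_dvd_natCast]
    have hta : ((a:ℤ)*n+b).toNat = a' * t n := by
      have h1 : (a:ℤ)*n+b = ((a' * t n : ℕ) : ℤ) := by
        rw [key1 n]; push_cast; rw [htcast]
      rw [h1, Int.toNat_natCast]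
    have htc : ((c:ℤ)*n+d).toNat = c' * t n := by
      have h1 : (c:ℤ)*n+d = ((c' * t n : ℕ) : ℤ) := by
        rw [key2 n]; push_cast; rw [htcast]
      rw [h1, Int.toNat_natCast]
    have hsetA : a'.primeFactors.filter (fun p => ¬ p ∣ t n)
        = Fa ∪ ((D.filter fun p => ¬ (p:ℤ) ∣ T n) ∩ A) := by
      ext p
      constructor
      · intro hmem
        obtain ⟨hpP, hpt⟩ := mem_filter.1 hmem
        have hdvdT : ¬ (p:ℤ) ∣ T n := fun hdT => hpt ((hconv p).2 hdT)
        by_cases hpg : p ∣ g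
        · refine mem_union_left _ (mem_filter.2 ⟨hpP, hpg, fun hpb => hdvdT ?_⟩)
          show (p:ℤ) ∣ (g:ℤ)*n + b₀
          exact dvd_add (Dvd.dvd.mul_right (Int.natCast_dvd_natCast.2 hpg) _) hpb
        · have hpA : p ∈ A := mem_filter.2 ⟨hpP, hpg⟩
          exact mem_union_right _ (mem_inter.2 ⟨mem_filter.2 ⟨mem_union_left _ hpA, hdvdT⟩, hpA⟩)
      · intro hmem
        rcases mem_union.1 hmem with hpFa | hin
        · obtain ⟨hpP, hpg, hpb⟩ := mem_filter.1 hpFa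
          refine mem_filter.2 ⟨hpP, fun hpt => hpb ?_⟩
          have h2 : (p:ℤ) ∣ (g:ℤ)*n + b₀ := (hconv p).1 hpt
          have h3 : (p:ℤ) ∣ (g:ℤ)*(n:ℤ) := Dvd.dvd.mul_right (Int.natCast_dvd_natCast.2 hpg) _
          have h4 := dvd_sub h2 h3
          rwa [add_sub_cancel_left] at h4
        · obtain ⟨hDf, hpA⟩ := mem_inter.1 hin
          obtain ⟨hpD, hdT⟩ := mem_filter.1 hDf
          exact mem_filter.2 ⟨(mem_filter.1 hpA).1, fun hpt => hdT ((hconv p).1 hpt)⟩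
    have hsetC : c'.primeFactors.filter (fun p => ¬ p ∣ t n)
        = Fc ∪ ((D.filter fun p => ¬ (p:ℤ) ∣ T n) ∩ C) := by
      ext p
      constructor
      · intro hmem
        obtain ⟨hpP, hpt⟩ := mem_filter.1 hmem
        have hdvdT : ¬ (p:ℤ) ∣ T n := fun hdT => hpt ((hconv p).2 hdT)
        by_cases hpg : p ∣ g
        · refine mem_union_left _ (mem_filter.2 ⟨hpP, hpg, fun hpb => hdvdT ?_⟩)
          show (p:ℤ) ∣ (g:ℤ)*n + b₀
          exact dvd_add (Dvd.dvd.mul_right (Int.natCast_dvd_natCast.2 hpg) _) hpb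
        · have hpC : p ∈ C := mem_filter.2 ⟨hpP, hpg⟩
          exact mem_union_right _ (mem_inter.2 ⟨mem_filter.2 ⟨mem_union_right _ hpC, hdvdT⟩, hpC⟩)
      · intro hmem
        rcases mem_union.1 hmem with hpFc | hin
        · obtain ⟨hpP, hpg, hpb⟩ := mem_filter.1 hpFc
          refine mem_filter.2 ⟨hpP, fun hpt => hpb ?_⟩
          have h2 : (p:ℤ) ∣ (g:ℤ)*n + b₀ := (hconv p).1 hpt
          have h3 : (p:ℤ) ∣ (g:ℤ)*(n:ℤ) := Dvd.dvd.mul_right (Int.natCast_dvd_natCast.2 hpg) _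
          have h4 := dvd_sub h2 h3
          rwa [add_sub_cancel_left] at h4
        · obtain ⟨hDf, hpC⟩ := mem_inter.1 hin
          obtain ⟨hpD, hdT⟩ := mem_filter.1 hDf
          exact mem_filter.2 ⟨(mem_filter.1 hpC).1, fun hpt => hdT ((hconv p).1 hpt)⟩
    rw [hta, htc, totient_mul_real a' (t n) ha'.ne' htn.ne',
      totient_mul_real c' (t n) hc'.ne' htn.ne', hsetA, hsetC]
    have hφ : (0:ℝ) < ((t n).totient : ℝ) := by
      exact_mod_cast Nat.totient_pos.mpr htn
    simp only [hV]
    rw [mul_assoc, mul_assoc, mul_div_mul_left _ _ hφ.ne']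
  -- main set equality
  have hL : {y : ℝ | ∃ n : ℕ, 0 < n ∧ 0 < (a : ℤ) * n + b ∧ 0 < (c : ℤ) * n + d ∧
        y = (Nat.totient ((a : ℤ) * n + b).toNat : ℝ) /
            (Nat.totient ((c : ℤ) * n + d).toNat : ℝ)}
      = V '' ↑(D.powerset) := by
    ext y
    simp only [Set.mem_setOf_eq, Set.mem_image, mem_coe, mem_powerset]
    constructor
    · rintro ⟨n, hn, hab, hcd, rfl⟩
      have hTn : 0 < T n := by
        rw [key1 n] at hab
        show (0:ℤ) < (g:ℤ)*n + b₀
        nlinarith [hab, ha'Z]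
      exact ⟨D.filter (fun p => ¬ (p:ℤ) ∣ T n), filter_subset _ _, (hval n hTn).symm⟩
    · rintro ⟨S, hS, rfl⟩
      obtain ⟨n₀, hn₀⟩ := exists_residues g b₀ S D hDprime
      set Q := ∏ q ∈ D, q with hQdef
      have hQ : 0 < Q := prod_pos fun p hp => (hDprime p hp).1.pos
      set k := b₀.natAbs + 1 with hkdef
      set n := n₀ + k * Q with hndef
      have hkn : k ≤ n := by
        calc k = k * 1 := (mul_one k).symm
        _ ≤ k * Q := Nat.mul_le_mul_left k hQ
        _ ≤ n₀ + k * Q := Nat.le_add_left _ _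
      have hn : 0 < n := by omega
      have hTn : 0 < T n := by
        simp only [hT]
        have hgn : (n:ℤ) ≤ (g:ℤ)*(n:ℤ) := by
          nlinarith [show (1:ℤ) ≤ (g:ℤ) from by exact_mod_cast hg, show (0:ℤ) ≤ (n:ℤ) from by positivity]
        have hknZ : (b₀.natAbs : ℤ) + 1 ≤ (n:ℤ) := by
          have h5 : b₀.natAbs + 1 ≤ n := hkn
          exact_mod_cast h5
        have habs : -(b₀.natAbs : ℤ) ≤ b₀ := by
          rw [← Int.abs_eq_natAbs]; exact neg_abs_le b₀
        linarith
      refine ⟨n, hn, ?_, ?_, ?_⟩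
      · rw [key1 n]; exact mul_pos ha'Z hTn
      · rw [key2 n]; exact mul_pos hc'Z hTn
      · rw [hval n hTn]
        congr 1
        ext p
        constructor
        · intro hpS
          have hpD : p ∈ D := hS hpS
          exact mem_filter.2 ⟨hpD, fun hdT => ((hn₀ k p hpD).1 hdT) hpS⟩
        · intro hmem
          obtain ⟨hpD, hdT⟩ := mem_filter.1 hmem
          by_contra hpS
          exact hdT ((hn₀ k p hpD).2 hpS)
  -- injectivity
  have hinj : Set.InjOn V ↑(D.powerset) := by
    intro S hSmem S' hS'mem hVeq
    rw [mem_coe, mem_powerset] at hSmem hS'mem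
    simp only [hV] at hVeq
    have hP1pos := prod_pos_factor (fun p hp => hPaPrime p (hFaSub S hp))
    have hP3pos := prod_pos_factor (fun p hp => hPaPrime p (hFaSub S' hp))
    have hP2pos := prod_pos_factor (fun p hp => hPcPrime p (hFcSub S hp))
    have hP4pos := prod_pos_factor (fun p hp => hPcPrime p (hFcSub S' hp))
    rw [div_eq_div_iff (by positivity) (by positivity)] at hVeq
    have h14 : (∏ p ∈ Fa ∪ (S ∩ A), (1 - (p:ℝ)⁻¹)) * (∏ p ∈ Fc ∪ (S' ∩ C), (1 - (p:ℝ)⁻¹))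
        = (∏ p ∈ Fa ∪ (S' ∩ A), (1 - (p:ℝ)⁻¹)) * (∏ p ∈ Fc ∪ (S ∩ C), (1 - (p:ℝ)⁻¹)) := by
      have hac : ((a':ℝ) * (c':ℝ)) ≠ 0 := by positivity
      apply mul_left_cancel₀ hac
      linear_combination hVeq
    have hdisj1 : Disjoint (Fa ∪ (S ∩ A)) (Fc ∪ (S' ∩ C)) :=
      Finset.disjoint_of_subset_left (hFaSub S) (Finset.disjoint_of_subset_right (hFcSub S') hdisj)
    have hdisj2 : Disjoint (Fa ∪ (S' ∩ A)) (Fc ∪ (S ∩ C)) :=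
      Finset.disjoint_of_subset_left (hFaSub S') (Finset.disjoint_of_subset_right (hFcSub S) hdisj)
    rw [← prod_union hdisj1, ← prod_union hdisj2] at h14
    have hU : (Fa ∪ (S ∩ A)) ∪ (Fc ∪ (S' ∩ C)) = (Fa ∪ (S' ∩ A)) ∪ (Fc ∪ (S ∩ C)) := by
      apply prod_one_sub_inv_inj _ _ h14
      · intro p hp
        rcases mem_union.1 hp with h' | h'
        exacts [hPaPrime p (hFaSub S h'), hPcPrime p (hFcSub S' h')]
      · intro p hp
        rcases mem_union.1 hp with h' | h'
        exacts [hPaPrime p (hFaSub S' h'), hPcPrime p (hFcSub S h')]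
    ext p
    by_cases hpA : p ∈ A
    · have hpPa : p ∈ a'.primeFactors := (mem_filter.1 hpA).1
      have hpg : ¬ p ∣ g := (mem_filter.1 hpA).2
      have hpPc : p ∉ c'.primeFactors := disjoint_left.1 hdisj hpPa
      have hpFa : p ∉ Fa := fun hmem => hpg (mem_filter.1 hmem).2.1
      have hpFc : p ∉ Fc := fun hmem => hpPc (mem_filter.1 hmem).1
      have hpC : p ∉ C := fun hmem => hpPc (mem_filter.1 hmem).1
      constructor
      · intro hpS
        have h1 : p ∈ (Fa ∪ (S ∩ A)) ∪ (Fc ∪ (S' ∩ C)) :=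
          mem_union_left _ (mem_union_right _ (mem_inter.2 ⟨hpS, hpA⟩))
        rw [hU] at h1
        rcases mem_union.1 h1 with h2 | h2
        · rcases mem_union.1 h2 with h3 | h3
          · exact absurd h3 hpFa
          · exact (mem_inter.1 h3).1
        · rcases mem_union.1 h2 with h3 | h3
          · exact absurd h3 hpFc
          · exact absurd (mem_inter.1 h3).2 hpC
      · intro hpS'
        have h1 : p ∈ (Fa ∪ (S' ∩ A)) ∪ (Fc ∪ (S ∩ C)) :=
          mem_union_left _ (mem_union_right _ (mem_inter.2 ⟨hpS', hpA⟩))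
        rw [← hU] at h1
        rcases mem_union.1 h1 with h2 | h2
        · rcases mem_union.1 h2 with h3 | h3
          · exact absurd h3 hpFa
          · exact (mem_inter.1 h3).1
        · rcases mem_union.1 h2 with h3 | h3
          · exact absurd h3 hpFc
          · exact absurd (mem_inter.1 h3).2 hpC
    · by_cases hpC : p ∈ C
      · have hpPc : p ∈ c'.primeFactors := (mem_filter.1 hpC).1
        have hpg : ¬ p ∣ g := (mem_filter.1 hpC).2
        have hpPa : p ∉ a'.primeFactors := disjoint_right.1 hdisj hpPc
        have hpFc : p ∉ Fc := fun hmem => hpg (mem_filter.1 hmem).2.1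
        have hpFa : p ∉ Fa := fun hmem => hpPa (mem_filter.1 hmem).1
        constructor
        · intro hpS
          have h1 : p ∈ (Fa ∪ (S' ∩ A)) ∪ (Fc ∪ (S ∩ C)) :=
            mem_union_right _ (mem_union_right _ (mem_inter.2 ⟨hpS, hpC⟩))
          rw [← hU] at h1
          rcases mem_union.1 h1 with h2 | h2
          · rcases mem_union.1 h2 with h3 | h3
            · exact absurd h3 hpFa
            · exact absurd (mem_inter.1 h3).2 hpA
          · rcases mem_union.1 h2 with h3 | h3
            · exact absurd h3 hpFc
            · exact (mem_inter.1 h3).1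
        · intro hpS'
          have h1 : p ∈ (Fa ∪ (S ∩ A)) ∪ (Fc ∪ (S' ∩ C)) :=
            mem_union_right _ (mem_union_right _ (mem_inter.2 ⟨hpS', hpC⟩))
          rw [hU] at h1
          rcases mem_union.1 h1 with h2 | h2
          · rcases mem_union.1 h2 with h3 | h3
            · exact absurd h3 hpFa
            · exact absurd (mem_inter.1 h3).2 hpA
          · rcases mem_union.1 h2 with h3 | h3
            · exact absurd h3 hpFc
            · exact (mem_inter.1 h3).1
      · constructor
        · intro hpS
          exact absurd (mem_union.1 (hSmem hpS)) (by rintro (h'|h') <;> [exact hpA h'; exact hpC h'])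
        · intro hpS'
          exact absurd (mem_union.1 (hS'mem hpS')) (by rintro (h'|h') <;> [exact hpA h'; exact hpC h'])
  -- cardinality of the tau part
  have htauA : (tau c a).primeFactors = A := by
    rw [tau_primeFactors, hAdef]
    ext p
    simp only [mem_filter, Nat.mem_primeFactors]
    constructor
    · rintro ⟨⟨hp, hpa, _⟩, hpc⟩
      have hpg : ¬ p ∣ g := fun hdvd => hpc (hdvd.trans (Nat.gcd_dvd_right a c))
      have hpa' : p ∣ a' := by
        rcases (Nat.Prime.dvd_mul hp).1 (haa ▸ hpa) with h' | h'
        · exact absurd h' hpg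
        · exact h'
      exact ⟨⟨hp, hpa', ha'.ne'⟩, hpg⟩
    · rintro ⟨⟨hp, hpa', _⟩, hpg⟩
      have hpa : p ∣ a := haa ▸ hpa'.mul_left g
      refine ⟨⟨hp, hpa, ha.ne'⟩, fun hpc => hpg (Nat.dvd_gcd hpa hpc)⟩
  have htauC : (tau a c).primeFactors = C := by
    rw [tau_primeFactors, hCdef]
    ext p
    simp only [mem_filter, Nat.mem_primeFactors]
    constructor
    · rintro ⟨⟨hp, hpc, _⟩, hpa⟩
      have hpg : ¬ p ∣ g := fun hdvd => hpa (hdvd.trans (Nat.gcd_dvd_left a c))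
      have hpc' : p ∣ c' := by
        rcases (Nat.Prime.dvd_mul hp).1 (hccc ▸ hpc) with h' | h'
        · exact absurd h' hpg
        · exact h'
      exact ⟨⟨hp, hpc', hc'.ne'⟩, hpg⟩
    · rintro ⟨⟨hp, hpc', _⟩, hpg⟩
      have hpc : p ∣ c := hccc ▸ hpc'.mul_left g
      refine ⟨⟨hp, hpc, hc.ne'⟩, fun hpa => hpg (Nat.dvd_gcd hpa hpc)⟩
  have hcard : (tau c a * tau a c).primeFactors.card = D.card := by
    rw [Nat.primeFactors_mul (tau_ne_zero c a) (tau_ne_zero a c), htauA, htauC]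
  constructor
  · rw [hL]
    exact (D.powerset.finite_toSet).image V
  · rw [hL, Set.ncard_image_of_injOn hinj, Set.ncard_coe_finset, card_powerset, hcard]
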